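/- For the self-adaptive SIS model on the star graph S_n (n ≥ 4), any equilibrium with 0 < x < 1 and 0 < x₁ < 1 satisfies x₁ = (γ/(β(n-2)))·((n-3)x + 1)/(1 - x); consequently, from x₁ < 1 one deduces x < ((n-2)R - 1)/((n-2)R + (n-3)) < 1, where R = β/γ > 1/(n-2). -/

import Mathlib

/-- For the self-adaptive SIS model on the star `S_n` (`n ≥ 4`), any interior
equilibrium satisfies `x₁ = (γ/(β(n-2)))·((n-3)x+1)/(1-x)`, and hence
`x < ((n-2)R - 1)/((n-2)R + (n-3)) < 1` where `R = β/γ > 1/(n-2)`. -/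
theorem star_ASIS_equilibrium_bound (n : ℕ) (hn : 4 ≤ n) (β γ x x₁ y : ℝ)
    (hβ : 0 < β) (hγ : 0 < γ) (hR : β / γ > 1 / ((n : ℝ) - 2))
    (hx : x ∈ Set.Ioo (0 : ℝ) 1) (hx₁ : x₁ ∈ Set.Ioo (0 : ℝ) 1)
    (hy : y ∈ Set.Ioo (0 : ℝ) 1)
    (e1 : β / γ * ((n : ℝ) - 1) * (1 - x₁) * y * x = x₁)
    (e2 : β / γ * (1 - x) * y * x₁ = x)
    (e3 : β / γ * ((n : ℝ) - 2) * (1 - y) * x₁ * y = y) :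
    x₁ = γ / (β * ((n : ℝ) - 2)) * ((((n : ℝ) - 3) * x + 1) / (1 - x)) ∧
      x < (((n : ℝ) - 2) * (β / γ) - 1) / (((n : ℝ) - 2) * (β / γ) + ((n : ℝ) - 3)) ∧
      (((n : ℝ) - 2) * (β / γ) - 1) / (((n : ℝ) - 2) * (β / γ) + ((n : ℝ) - 3)) < 1 := by
  obtain ⟨hx0, hx1⟩ := hx
  obtain ⟨hx₁0, hx₁1⟩ := hx₁
  obtain ⟨hy0, hy1⟩ := hy
  have hn4 : (4:ℝ) ≤ (n:ℝ) := by exact_mod_cast hn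
  have hn2 : (0:ℝ) < (n:ℝ) - 2 := by linarith
  have hγ' : (γ:ℝ) ≠ 0 := ne_of_gt hγ
  have hβ' : (β:ℝ) ≠ 0 := ne_of_gt hβ
  have hy' : y ≠ 0 := ne_of_gt hy0
  have h1x : (1:ℝ) - x ≠ 0 := by linarith
  have hRn : 1 < β / γ * ((n:ℝ) - 2) := by
    rw [gt_iff_lt, div_lt_iff₀ hn2] at hR; linarith
  -- clear denominators in equations
  have e2' : β * (1 - x) * y * x₁ = γ * x := by
    field_simp at e2; linarith
  have e3' : β * ((n:ℝ) - 2) * (1 - y) * x₁ * y = γ * y := by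
    field_simp at e3; linear_combination y * e3
  have h3 : β * ((n:ℝ) - 2) * (1 - y) * x₁ = γ := by
    have h : (β * ((n:ℝ) - 2) * (1 - y) * x₁) * y = γ * y := by linarith [e3']
    exact mul_right_cancel₀ hy' h
  -- main equation
  have key : β * ((n:ℝ) - 2) * (1 - x) * x₁ = γ * (((n:ℝ) - 3) * x + 1) := by
    linear_combination ((n:ℝ) - 2) * e2' + (1 - x) * h3
  have hpart1 : x₁ = γ / (β * ((n : ℝ) - 2)) * ((((n : ℝ) - 3) * x + 1) / (1 - x)) := by
    field_simp
    linear_combination key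
  refine ⟨hpart1, ?_, ?_⟩
  · have hD : (0:ℝ) < ((n:ℝ) - 2) * (β / γ) + ((n:ℝ) - 3) := by nlinarith
    rw [lt_div_iff₀ hD]
    have hlt : γ * (((n:ℝ) - 3) * x + 1) < β * ((n:ℝ) - 2) * (1 - x) := by
      nlinarith [mul_pos (mul_pos hβ hn2) (show (0:ℝ) < 1 - x by linarith)]
    have h2 : ((n:ℝ) - 3) * x + 1 < β / γ * ((n:ℝ) - 2) * (1 - x) := by
      rw [← mul_lt_mul_iff_right₀ hγ]
      have heq : γ * (β / γ * ((n:ℝ) - 2) * (1 - x)) = β * ((n:ℝ) - 2) * (1 - x) := by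
        field_simp
      rw [heq]
      linarith [hlt]
    nlinarith [h2]
  · have hD : (0:ℝ) < ((n:ℝ) - 2) * (β / γ) + ((n:ℝ) - 3) := by nlinarith
    rw [div_lt_one hD]
    linarith
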